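/- arXiv:2602.22512 — 2 statements merged into one kernel-verified Lean document; each statement's English description precedes it below -/
import Mathlib

section
/- Let $\{a_n\},\{b_n\},\{c_n\},\{d_n\}$ be real sequences with $1\le a_n\le b_n$ for all $n$, $\psi:\mathbb{N}\to[0,\infty)$, and $s\in(0,1)$. If $\sum_{n\in\mathbb{N}}b_n(\psi(n)/b_n)^s<\infty$, then $\mathcal{H}^{1+s}(M_2(\psi))=0$, where $M_2(\psi)=\{(x,y)\in[0,1]^2:\|a_nx+c_n\|\cdot\|b_ny+d_n\|<\psi(n)\text{ for infinitely many }n\}$. -/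
open Set MeasureTheory
open scoped ENNReal Classical

/-- Distance from `x` to the nearest integer. -/
noncomputable def nint (x : ℝ) : ℝ := |x - round x|




lemma nint_nonneg (x : ℝ) : 0 ≤ nint x := abs_nonneg _
lemma nint_le_half (x : ℝ) : nint x ≤ 1/2 := abs_sub_round x

/-- tsum over padded list -/
lemma tsum_getD (L : List (Set (ℝ×ℝ))) (f : Set (ℝ×ℝ) → ℝ≥0∞) (hf : f ∅ = 0) :
    ∑' j : ℕ, f (L.getD j ∅) = (L.map f).sum := by
  rw [tsum_eq_sum (s := Finset.range L.length)
    (fun j hj => by rw [List.getD_eq_default _ _ (by simpa using hj)]; exact hf)]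
  induction L with
  | nil => simp
  | cons S T ih =>
    rw [List.map_cons, List.sum_cons, List.length_cons, Finset.sum_range_succ', ← ih]
    simp [add_comm]

/-- combiner -/
lemma listCover_biUnion {ι : Type*} (I : Finset ι) (E : ι → Set (ℝ×ℝ))
    (B : ι → ℝ≥0∞) (D : ℝ≥0∞) (g : Set (ℝ×ℝ) → ℝ≥0∞)
    (h : ∀ i ∈ I, ∃ L : List (Set (ℝ×ℝ)), (∀ p ∈ E i, ∃ S ∈ L, p ∈ S) ∧
      (∀ S ∈ L, EMetric.diam S ≤ D) ∧ (L.map g).sum ≤ B i) :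
    ∃ L : List (Set (ℝ×ℝ)), (∀ p ∈ ⋃ i ∈ I, E i, ∃ S ∈ L, p ∈ S) ∧
      (∀ S ∈ L, EMetric.diam S ≤ D) ∧ (L.map g).sum ≤ ∑ i ∈ I, B i := by
  classical
  induction I using Finset.induction with
  | empty => exact ⟨[], by simp, by simp, by simp⟩
  | @insert j I' hi ih =>
    obtain ⟨L₁, hc₁, hd₁, hs₁⟩ := h j (Finset.mem_insert_self _ _)
    obtain ⟨L₂, hc₂, hd₂, hs₂⟩ := ih (fun i hi' => h i (Finset.mem_insert_of_mem hi'))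
    refine ⟨L₁ ++ L₂, ?_, ?_, ?_⟩
    · intro p hp
      simp only [Finset.mem_insert, mem_iUnion, exists_prop] at hp
      obtain ⟨i, hiI, hpi⟩ := hp
      rcases hiI with rfl | hiI
      · obtain ⟨S, hS, hpS⟩ := hc₁ p hpi
        exact ⟨S, List.mem_append_left _ hS, hpS⟩
      · obtain ⟨S, hS, hpS⟩ := hc₂ p (mem_iUnion₂.2 ⟨i, hiI, hpi⟩)
        exact ⟨S, List.mem_append_right _ hS, hpS⟩
    · intro S hS
      rcases List.mem_append.1 hS with h' | h'
      · exact hd₁ S h'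
      · exact hd₂ S h'
    · rw [List.map_append, List.sum_append, Finset.sum_insert hi]
      exact add_le_add hs₁ hs₂

/-- 1-D subdivision of an interval -/
lemma covIcc (p q t : ℝ) (ht : 0 < t) :
    Icc p q ⊆ ⋃ j ∈ Finset.range (⌊(q-p)/t⌋₊+1), Icc (p + j*t) (p + (j+1)*t) := by
  intro x hx
  have hxp : 0 ≤ x - p := by linarith [hx.1]
  set j := ⌊(x-p)/t⌋₊ with hj
  have hj1 : (j : ℝ) ≤ (x-p)/t := Nat.floor_le (by positivity)
  have hj2 : (x-p)/t < j + 1 := Nat.lt_floor_add_one _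
  have hjq : j ≤ ⌊(q-p)/t⌋₊ := Nat.floor_le_floor (by
    have : x - p ≤ q - p := by linarith [hx.2]
    exact div_le_div_of_nonneg_right this ht.le)
  refine mem_iUnion₂.2 ⟨j, Finset.mem_range.2 (Nat.lt_succ_of_le hjq), ?_⟩
  have h1 : (j:ℝ) * t ≤ x - p := (le_div_iff₀ ht).1 hj1
  have h2 : x - p < ((j:ℝ) + 1) * t := (div_lt_iff₀ ht).1 hj2
  exact ⟨by linarith, by linarith⟩


lemma diam_prod_le (p₁ q₁ p₂ q₂ t : ℝ) (h1 : q₁ - p₁ ≤ t) (h2 : q₂ - p₂ ≤ t) :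
    EMetric.diam (Icc p₁ q₁ ×ˢ Icc p₂ q₂) ≤ ENNReal.ofReal t := by
  apply EMetric.diam_le
  rintro x ⟨hx1, hx2⟩ y ⟨hy1, hy2⟩
  rw [Prod.edist_eq]
  apply max_le
  · exact le_trans (EMetric.edist_le_diam_of_mem hx1 hy1)
      (by rw [Real.ediam_Icc]; exact ENNReal.ofReal_le_ofReal h1)
  · exact le_trans (EMetric.edist_le_diam_of_mem hx2 hy2)
      (by rw [Real.ediam_Icc]; exact ENNReal.ofReal_le_ofReal h2)

lemma rectCover_x (s p q w h : ℝ) (hs : 0 < s) (hw : 0 < w) (hh : 0 < h) (hhw : h ≤ w) :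
    ∃ L : List (Set (ℝ×ℝ)), (∀ pt ∈ Icc p (p+w) ×ˢ Icc q (q+h), ∃ S ∈ L, pt ∈ S) ∧
      (∀ S ∈ L, EMetric.diam S ≤ ENNReal.ofReal h) ∧
      ((L.map (fun S => EMetric.diam S ^ (1+s))).sum ≤ ENNReal.ofReal ((w/h+1) * h^(1+s))) := by
  refine ⟨(List.range (⌊w/h⌋₊+1)).map
    (fun j : ℕ => Icc (p+(j:ℝ)*h) (p+((j:ℝ)+1)*h) ×ˢ Icc q (q+h)), ?_, ?_, ?_⟩
  · rintro pt ⟨hpt1, hpt2⟩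
    have := covIcc p (p+w) h hh hpt1
    simp only [mem_iUnion₂, Finset.mem_range] at this
    obtain ⟨j, hj, hx⟩ := this
    have hj' : j < ⌊w/h⌋₊ + 1 := by simpa using hj
    exact ⟨_, List.mem_map.2 ⟨j, List.mem_range.2 hj', rfl⟩, ⟨hx, hpt2⟩⟩
  · rintro S hS
    obtain ⟨j, _, rfl⟩ := List.mem_map.1 hS
    exact diam_prod_le _ _ _ _ _ (by ring_nf; linarith) (by linarith)
  · have hb : ∀ x ∈ ((List.range (⌊w/h⌋₊+1)).map
        (fun j : ℕ => Icc (p+(j:ℝ)*h) (p+((j:ℝ)+1)*h) ×ˢ Icc q (q+h))).map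
        (fun S => EMetric.diam S ^ (1+s)), x ≤ ENNReal.ofReal (h^(1+s)) := by
      intro x hx
      simp only [List.map_map, List.mem_map] at hx
      obtain ⟨j, _, rfl⟩ := hx
      calc (EMetric.diam ((Icc (p+(j:ℝ)*h) (p+((j:ℝ)+1)*h) ×ˢ Icc q (q+h)) : Set (ℝ×ℝ))) ^ (1+s)
          ≤ (ENNReal.ofReal h) ^ (1+s) := by
            apply ENNReal.rpow_le_rpow _ (by linarith)
            exact diam_prod_le _ _ _ _ _ (by ring_nf; linarith) (by linarith)
        _ = ENNReal.ofReal (h^(1+s)) := by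
            rw [← ENNReal.ofReal_rpow_of_pos hh]
    calc _ ≤ _ := List.sum_le_card_nsmul _ _ hb
      _ ≤ ENNReal.ofReal ((w/h+1) * h^(1+s)) := by
        simp only [List.length_map, List.length_range, nsmul_eq_mul]
        rw [← ENNReal.ofReal_natCast, ← ENNReal.ofReal_mul (by positivity)]
        apply ENNReal.ofReal_le_ofReal
        apply mul_le_mul_of_nonneg_right _ (by positivity)
        push_cast
        have := Nat.floor_le (a := w/h) (by positivity)
        linarith

lemma rectCover_y (s p q w h : ℝ) (hs : 0 < s) (hw : 0 < w) (hh : 0 < h) (hwh : w ≤ h) :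
    ∃ L : List (Set (ℝ×ℝ)), (∀ pt ∈ Icc p (p+w) ×ˢ Icc q (q+h), ∃ S ∈ L, pt ∈ S) ∧
      (∀ S ∈ L, EMetric.diam S ≤ ENNReal.ofReal w) ∧
      ((L.map (fun S => EMetric.diam S ^ (1+s))).sum ≤ ENNReal.ofReal ((h/w+1) * w^(1+s))) := by
  refine ⟨(List.range (⌊h/w⌋₊+1)).map
    (fun j : ℕ => Icc p (p+w) ×ˢ Icc (q+(j:ℝ)*w) (q+((j:ℝ)+1)*w)), ?_, ?_, ?_⟩
  · rintro pt ⟨hpt1, hpt2⟩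
    have := covIcc q (q+h) w hw hpt2
    simp only [mem_iUnion₂, Finset.mem_range] at this
    obtain ⟨j, hj, hy⟩ := this
    have hj' : j < ⌊h/w⌋₊ + 1 := by simpa using hj
    exact ⟨_, List.mem_map.2 ⟨j, List.mem_range.2 hj', rfl⟩, ⟨hpt1, hy⟩⟩
  · rintro S hS
    obtain ⟨j, _, rfl⟩ := List.mem_map.1 hS
    exact diam_prod_le _ _ _ _ _ (by linarith) (by ring_nf; linarith)
  · have hb : ∀ x ∈ ((List.range (⌊h/w⌋₊+1)).map
        (fun j : ℕ => Icc p (p+w) ×ˢ Icc (q+(j:ℝ)*w) (q+((j:ℝ)+1)*w))).map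
        (fun S => EMetric.diam S ^ (1+s)), x ≤ ENNReal.ofReal (w^(1+s)) := by
      intro x hx
      simp only [List.map_map, List.mem_map] at hx
      obtain ⟨j, _, rfl⟩ := hx
      calc (EMetric.diam ((Icc p (p+w) ×ˢ Icc (q+(j:ℝ)*w) (q+((j:ℝ)+1)*w)) : Set (ℝ×ℝ))) ^ (1+s)
          ≤ (ENNReal.ofReal w) ^ (1+s) := by
            apply ENNReal.rpow_le_rpow _ (by linarith)
            exact diam_prod_le _ _ _ _ _ (by linarith) (by ring_nf; linarith)
        _ = ENNReal.ofReal (w^(1+s)) := by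
            rw [← ENNReal.ofReal_rpow_of_pos hw]
    calc _ ≤ _ := List.sum_le_card_nsmul _ _ hb
      _ ≤ ENNReal.ofReal ((h/w+1) * w^(1+s)) := by
        simp only [List.length_map, List.length_range, nsmul_eq_mul]
        rw [← ENNReal.ofReal_natCast, ← ENNReal.ofReal_mul (by positivity)]
        apply ENNReal.ofReal_le_ofReal
        apply mul_le_mul_of_nonneg_right _ (by positivity)
        push_cast
        have := Nat.floor_le (a := h/w) (by positivity)
        linarith

lemma rectCover (s p q w h : ℝ) (hs : 0 < s) (hw : 0 < w) (hh : 0 < h) :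
    ∃ L : List (Set (ℝ×ℝ)), (∀ pt ∈ Icc p (p+w) ×ˢ Icc q (q+h), ∃ S ∈ L, pt ∈ S) ∧
      (∀ S ∈ L, EMetric.diam S ≤ ENNReal.ofReal (min w h)) ∧
      ((L.map (fun S => EMetric.diam S ^ (1+s))).sum ≤ ENNReal.ofReal (w * h^s + h * w^s)) := by
  rcases le_total h w with hhw | hwh
  · obtain ⟨L, h1, h2, h3⟩ := rectCover_x s p q w h hs hw hh hhw
    refine ⟨L, h1, fun S hS => (h2 S hS).trans (by rw [min_eq_right hhw]), h3.trans ?_⟩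
    apply ENNReal.ofReal_le_ofReal
    have e1 : (w/h+1) * h^(1+s) = w * h^s + h * h^s := by
      rw [Real.rpow_add hh 1 s, Real.rpow_one]
      field_simp
    rw [e1]
    have : h * h^s ≤ h * w^s :=
      mul_le_mul_of_nonneg_left (Real.rpow_le_rpow hh.le hhw hs.le) hh.le
    linarith
  · obtain ⟨L, h1, h2, h3⟩ := rectCover_y s p q w h hs hw hh hwh
    refine ⟨L, h1, fun S hS => (h2 S hS).trans (by rw [min_eq_left hwh]), h3.trans ?_⟩
    apply ENNReal.ofReal_le_ofReal
    have e1 : (h/w+1) * w^(1+s) = h * w^s + w * w^s := by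
      rw [Real.rpow_add hw 1 s, Real.rpow_one]
      field_simp
    rw [e1]
    have : w * w^s ≤ w * h^s :=
      mul_le_mul_of_nonneg_left (Real.rpow_le_rpow hw.le hwh hs.le) hw.le
    linarith

lemma oneD (A c δ : ℝ) (hA : 1 ≤ A) (hδ : 0 < δ) (x : ℝ) (hx : x ∈ Icc (0:ℝ) 1)
    (hnint : nint (A*x+c) < δ) :
    ∃ i ∈ Finset.range (⌊A+2*δ⌋₊+1),
      x ∈ Icc (((⌈c-δ⌉ : ℤ) + (i:ℝ) - c)/A - δ/A) ((((⌈c-δ⌉ : ℤ):ℝ) + (i:ℝ) - c)/A - δ/A + 2*(δ/A)) := by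
  have hA0 : (0:ℝ) < A := lt_of_lt_of_le one_pos hA
  set m := round (A*x+c) with hm
  have habs : |A*x+c - m| < δ := hnint
  have h1 : A*x + c - δ < m := by
    have := abs_lt.1 habs
    linarith [this.2]
  have h2 : (m:ℝ) < A*x + c + δ := by
    have := abs_lt.1 habs
    linarith [this.1]
  have hAx0 : 0 ≤ A*x := mul_nonneg hA0.le hx.1
  have hAx1 : A*x ≤ A := by
    calc A*x ≤ A*1 := mul_le_mul_of_nonneg_left hx.2 hA0.le
      _ = A := mul_one A
  have hmlb : c - δ ≤ (m:ℝ) := by linarith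
  have hceil : ⌈c-δ⌉ ≤ m := Int.ceil_le.2 hmlb
  set i := (m - ⌈c-δ⌉).toNat with hi
  have hicast : (i:ℝ) = (m:ℝ) - (⌈c-δ⌉:ℝ) := by
    have htn : ((m - ⌈c - δ⌉).toNat : ℤ) = m - ⌈c - δ⌉ := Int.toNat_of_nonneg (by omega)
    have h' : ((i:ℤ) : ℝ) = (m:ℝ) - (⌈c-δ⌉:ℝ) := by
      rw [hi, htn]
      push_cast
      ring
    exact_mod_cast h'
  have hub : (i:ℝ) ≤ A + 2*δ := by
    have := Int.le_ceil (c-δ)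
    rw [hicast]
    linarith
  refine ⟨i, Finset.mem_range.2 (Nat.lt_succ_of_le (Nat.le_floor hub)), ?_, ?_⟩
  · rw [hicast]
    have : ((m:ℝ) - c - δ)/A ≤ x := by
      rw [div_le_iff₀ hA0]
      linarith [mul_comm x A]
    calc ((⌈c-δ⌉:ℝ) + ((m:ℝ) - (⌈c-δ⌉:ℝ)) - c)/A - δ/A = ((m:ℝ) - c - δ)/A := by ring
      _ ≤ x := this
  · rw [hicast]
    have : x ≤ ((m:ℝ) - c + δ)/A := by
      rw [le_div_iff₀ hA0]
      linarith [mul_comm x A]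
    calc x ≤ ((m:ℝ) - c + δ)/A := this
      _ = ((⌈c-δ⌉:ℝ) + ((m:ℝ) - (⌈c-δ⌉:ℝ)) - c)/A - δ/A + 2*(δ/A) := by ring

noncomputable def Cfac (s : ℝ) : ℝ := 128/(1-(2:ℝ)^(s-1)) + 256/((2:ℝ)^(1-s)-1)

lemma pow_id1 (s : ℝ) (k : ℕ) : ((2:ℝ)^k)⁻¹ * ((2:ℝ)^k)^s = ((2:ℝ)^(s-1))^k := by
  rw [← Real.rpow_natCast (2:ℝ) k, ← Real.rpow_natCast ((2:ℝ)^(s-1)) k,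
    ← Real.rpow_neg (by norm_num : (0:ℝ) ≤ 2), ← Real.rpow_mul (by norm_num : (0:ℝ) ≤ 2),
    ← Real.rpow_mul (by norm_num : (0:ℝ) ≤ 2),
    ← Real.rpow_add (by norm_num : (0:ℝ) < 2)]
  ring_nf

lemma pow_id2 (s : ℝ) (k : ℕ) : (2:ℝ)^k * (((2:ℝ)^k)⁻¹)^s = ((2:ℝ)^(1-s))^k := by
  rw [← Real.rpow_natCast (2:ℝ) k, ← Real.rpow_natCast ((2:ℝ)^(1-s)) k,
    ← Real.rpow_neg (by norm_num : (0:ℝ) ≤ 2), ← Real.rpow_mul (by norm_num : (0:ℝ) ≤ 2),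
    ← Real.rpow_mul (by norm_num : (0:ℝ) ≤ 2),
    ← Real.rpow_add (by norm_num : (0:ℝ) < 2)]
  ring_nf

lemma realSum (s a b ψ : ℝ) (K : ℕ) (hs0 : 0 < s) (hs1 : s < 1) (ha : 1 ≤ a) (hab : a ≤ b)
    (hψ0 : 0 < ψ) (hK : (2:ℝ)^(K+1) * ψ ≤ 1) :
    ∑ k ∈ Finset.range (K+1),
      ((a + 2*((2:ℝ)^k)⁻¹ + 1) * (b + 2*((2:ℝ)^(k+1)*ψ) + 1) *
       ((2*((((2:ℝ)^k)⁻¹)/a)) * (2*((2:ℝ)^(k+1)*ψ/b))^s +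
        (2*((2:ℝ)^(k+1)*ψ/b)) * (2*((((2:ℝ)^k)⁻¹)/a))^s))
    ≤ Cfac s * (b * (ψ/b)^s) := by
  have ha0 : (0:ℝ) < a := lt_of_lt_of_le one_pos ha
  have hb0 : (0:ℝ) < b := lt_of_lt_of_le ha0 hab
  have hb1 : (1:ℝ) ≤ b := le_trans ha hab
  set ρ := (2:ℝ)^(s-1) with hρ
  set τ := (2:ℝ)^(1-s) with hτ
  have hρ0 : 0 < ρ := Real.rpow_pos_of_pos (by norm_num) _
  have hρ1 : ρ < 1 := Real.rpow_lt_one_of_one_lt_of_neg (by norm_num) (by linarith)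
  have hτ1 : 1 < τ := Real.one_lt_rpow_iff_of_pos (by norm_num) |>.2 (by norm_num; linarith)
  set C1 := (2/a)*(4*ψ/b)^s with hC1
  set C2 := (4*ψ/b)*(2/a)^s with hC2
  have hC1n : 0 ≤ C1 := by positivity
  have hC2n : 0 ≤ C2 := by positivity
  -- identity for each summand
  have key : ∀ k ∈ Finset.range (K+1),
      ((a + 2*((2:ℝ)^k)⁻¹ + 1) * (b + 2*((2:ℝ)^(k+1)*ψ) + 1) *
       ((2*((((2:ℝ)^k)⁻¹)/a)) * (2*((2:ℝ)^(k+1)*ψ/b))^s +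
        (2*((2:ℝ)^(k+1)*ψ/b)) * (2*((((2:ℝ)^k)⁻¹)/a))^s))
      ≤ 16*a*b * (C1 * ρ^k + C2 * τ^k) := by
    intro k hk
    have hk' : k ≤ K := by
      have := Finset.mem_range.1 hk; omega
    have hδ1 : ((2:ℝ)^k)⁻¹ ≤ 1 := by
      rw [inv_le_one_iff₀]
      right
      exact one_le_pow₀ (by norm_num)
    have hδ'1 : (2:ℝ)^(k+1)*ψ ≤ 1 := by
      refine le_trans ?_ hK
      apply mul_le_mul_of_nonneg_right _ hψ0.le
      exact pow_le_pow_right₀ (by norm_num) (by omega)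
    have e1 : (2*((((2:ℝ)^k)⁻¹)/a)) * (2*((2:ℝ)^(k+1)*ψ/b))^s = C1 * ρ^k := by
      have h2 : 2*((2:ℝ)^(k+1)*ψ/b) = (4*ψ/b) * (2:ℝ)^k := by
        rw [pow_succ]; ring
      rw [h2, Real.mul_rpow (by positivity) (by positivity), hC1, hρ, ← pow_id1 s k]
      ring
    have e2 : (2*((2:ℝ)^(k+1)*ψ/b)) * (2*((((2:ℝ)^k)⁻¹)/a))^s = C2 * τ^k := by
      have h2 : 2*((((2:ℝ)^k)⁻¹)/a) = (2/a) * ((2:ℝ)^k)⁻¹ := by ring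
      have h3 : 2*((2:ℝ)^(k+1)*ψ/b) = (4*ψ/b) * (2:ℝ)^k := by
        rw [pow_succ]; ring
      rw [h2, h3, Real.mul_rpow (by positivity) (by positivity), hC2, hτ, ← pow_id2 s k]
      ring
    rw [e1, e2]
    have hT : 0 ≤ C1 * ρ^k + C2 * τ^k := by positivity
    have hc1 : a + 2*((2:ℝ)^k)⁻¹ + 1 ≤ 4*a := by linarith
    have hc2 : b + 2*((2:ℝ)^(k+1)*ψ) + 1 ≤ 4*b := by
      have : (0:ℝ) < (2:ℝ)^(k+1)*ψ := by positivity
      linarith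
    calc (a + 2*((2:ℝ)^k)⁻¹ + 1) * (b + 2*((2:ℝ)^(k+1)*ψ) + 1) * (C1 * ρ^k + C2 * τ^k)
        ≤ (4*a) * (4*b) * (C1 * ρ^k + C2 * τ^k) := by
          apply mul_le_mul_of_nonneg_right _ hT
          apply mul_le_mul hc1 hc2 (by positivity) (by positivity)
      _ = 16*a*b * (C1 * ρ^k + C2 * τ^k) := by ring
  calc ∑ k ∈ Finset.range (K+1), _ ≤ ∑ k ∈ Finset.range (K+1), 16*a*b * (C1 * ρ^k + C2 * τ^k) :=
        Finset.sum_le_sum key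
    _ = 16*a*b * (C1 * ∑ k ∈ Finset.range (K+1), ρ^k + C2 * ∑ k ∈ Finset.range (K+1), τ^k) := by
        simp only [Finset.mul_sum, mul_add, Finset.sum_add_distrib]
    _ ≤ Cfac s * (b * (ψ/b)^s) := by
        have hSρ : ∑ k ∈ Finset.range (K+1), ρ^k ≤ (1-ρ)⁻¹ := by
          refine le_trans (Summable.sum_le_tsum (f := fun k => ρ^k) (L := SummationFilter.unconditional ℕ) _ (fun _ _ => by positivity) ?_) ?_
          · exact summable_geometric_of_lt_one hρ0.le hρ1
          · rw [tsum_geometric_of_lt_one hρ0.le hρ1]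
        have hSτ : ∑ k ∈ Finset.range (K+1), τ^k ≤ ψ^(s-1) / (τ-1) := by
          rw [geom_sum_eq hτ1.ne' (K+1)]
          have hτK : τ^(K+1) ≤ ψ^(s-1) := by
            have h2K : (2:ℝ)^(K+1) ≤ ψ⁻¹ := by
              rw [← one_div]
              exact (le_div_iff₀ hψ0).2 hK
            have e : τ^(K+1) = ((2:ℝ)^(K+1))^(1-s) := by
              rw [hτ, ← Real.rpow_natCast ((2:ℝ)^(1-s)) (K+1),
                ← Real.rpow_natCast (2:ℝ) (K+1),
                ← Real.rpow_mul (by norm_num : (0:ℝ) ≤ 2),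
                ← Real.rpow_mul (by norm_num : (0:ℝ) ≤ 2)]
              ring_nf
            rw [e]
            calc ((2:ℝ)^(K+1))^(1-s) ≤ (ψ⁻¹)^(1-s) :=
                  Real.rpow_le_rpow (by positivity) h2K (by linarith)
              _ = ψ^(s-1) := by
                  rw [← Real.rpow_neg_one ψ, ← Real.rpow_mul hψ0.le]
                  ring_nf
            
          exact div_le_div_of_nonneg_right (by linarith) (by linarith)
        -- final numeric estimate
        have hρ1' : 0 < 1 - ρ := by linarith
        have hτ1' : 0 < τ - 1 := by linarith
        have hP : b * (ψ/b)^s = b^(1-s) * ψ^s := by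
          rw [Real.div_rpow hψ0.le hb0.le]
          rw [Real.rpow_sub hb0, Real.rpow_one]
          field_simp
        have hψs : 0 ≤ ψ^(s-1) := by positivity
        calc 16*a*b * (C1 * ∑ k ∈ Finset.range (K+1), ρ^k + C2 * ∑ k ∈ Finset.range (K+1), τ^k)
            ≤ 16*a*b * (C1 * (1-ρ)⁻¹ + C2 * (ψ^(s-1)/(τ-1))) := by
              apply mul_le_mul_of_nonneg_left _ (by positivity)
              apply add_le_add
              · exact mul_le_mul_of_nonneg_left hSρ hC1n
              · exact mul_le_mul_of_nonneg_left hSτ hC2n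
          _ = (16*a*b*C1) * (1-ρ)⁻¹ + (16*a*b*C2*ψ^(s-1)) * (τ-1)⁻¹ := by
              field_simp
          _ ≤ (128 * (b * (ψ/b)^s)) * (1-ρ)⁻¹ + (256 * (b * (ψ/b)^s)) * (τ-1)⁻¹ := by
              apply add_le_add
              · apply mul_le_mul_of_nonneg_right _ (by positivity)
                have e1 : 16*a*b*C1 = 32*b*((4*(ψ/b))^s) := by
                  rw [hC1]
                  have : 4*ψ/b = 4*(ψ/b) := by ring
                  rw [this]
                  field_simp
                  ring
                rw [e1, Real.mul_rpow (by norm_num) (by positivity)]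
                have h4 : (4:ℝ)^s ≤ 4 := by
                  calc (4:ℝ)^s ≤ (4:ℝ)^(1:ℝ) :=
                        Real.rpow_le_rpow_of_exponent_le (by norm_num) hs1.le
                    _ = 4 := Real.rpow_one 4
                have hd : (0:ℝ) ≤ (ψ/b)^s := by positivity
                calc 32*b*((4:ℝ)^s * (ψ/b)^s) = (4:ℝ)^s * (32*b*(ψ/b)^s) := by ring
                  _ ≤ 4 * (32*b*(ψ/b)^s) := by
                      apply mul_le_mul_of_nonneg_right h4 (by positivity)
                  _ = 128 * (b * (ψ/b)^s) := by ring
              · apply mul_le_mul_of_nonneg_right _ (by positivity)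
                have i1 : ψ * ψ^(s-1) = ψ^s := by
                  rw [show s = 1+(s-1) by ring, Real.rpow_add hψ0, Real.rpow_one]
                  ring_nf
                have i2 : (2/a)^s = 2^s/a^s := Real.div_rpow (by norm_num : (0:ℝ) ≤ 2) ha0.le s
                have i3 : a * (a^s)⁻¹ = a^(1-s) := by
                  rw [Real.rpow_sub ha0, Real.rpow_one]
                  ring
                have e2 : 16*a*b*C2*ψ^(s-1) = 64 * (2:ℝ)^s * (a*(a^s)⁻¹) * (ψ*ψ^(s-1)) := by
                  rw [hC2, i2]
                  field_simp
                  ring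
                rw [e2, i1, i3, hP]
                have i4 : (2:ℝ)^s ≤ 2 := by
                  calc (2:ℝ)^s ≤ (2:ℝ)^(1:ℝ) :=
                        Real.rpow_le_rpow_of_exponent_le (by norm_num) hs1.le
                    _ = 2 := Real.rpow_one 2
                have i5 : a^(1-s) ≤ b^(1-s) :=
                  Real.rpow_le_rpow ha0.le hab (by linarith)
                have hψsn : (0:ℝ) ≤ ψ^s := by positivity
                calc 64 * (2:ℝ)^s * a^(1-s) * ψ^s ≤ 64 * 2 * b^(1-s) * ψ^s := by
                      apply mul_le_mul_of_nonneg_right _ hψsn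
                      have : (0:ℝ) ≤ a^(1-s) := by positivity
                      nlinarith [Real.rpow_pos_of_pos hb0 (1-s)]
                  _ ≤ 256 * (b^(1-s) * ψ^s) := by
                      nlinarith [Real.rpow_pos_of_pos hb0 (1-s), hψsn]
          _ = Cfac s * (b * (ψ/b)^s) := by
              rw [Cfac, ← hρ, ← hτ]
              ring

lemma min_le_sqrt_mul (w h : ℝ) (hw : 0 ≤ w) (hh : 0 ≤ h) : min w h ≤ Real.sqrt (w*h) := by
  rcases le_total w h with hwh | hhw
  · rw [min_eq_left hwh]
    calc w = Real.sqrt (w*w) := by rw [Real.sqrt_mul_self hw]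
      _ ≤ Real.sqrt (w*h) := Real.sqrt_le_sqrt (by nlinarith)
  · rw [min_eq_right hhw]
    calc h = Real.sqrt (h*h) := by rw [Real.sqrt_mul_self hh]
      _ ≤ Real.sqrt (w*h) := Real.sqrt_le_sqrt (by nlinarith)

lemma exists_coverList (s a b c d ψ : ℝ) (hs0 : 0 < s) (hs1 : s < 1) (ha : 1 ≤ a) (hab : a ≤ b)
    (hψ0 : 0 ≤ ψ) (hψ4 : ψ ≤ 1/4) :
    ∃ L : List (Set (ℝ×ℝ)),
      (∀ p : ℝ×ℝ, p.1 ∈ Icc (0:ℝ) 1 → p.2 ∈ Icc (0:ℝ) 1 →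
        nint (a*p.1+c) * nint (b*p.2+d) < ψ → ∃ S ∈ L, p ∈ S) ∧
      (∀ S ∈ L, EMetric.diam S ≤ ENNReal.ofReal (3*Real.sqrt ψ)) ∧
      ((L.map (fun S => EMetric.diam S ^ (1+s))).sum ≤
        ENNReal.ofReal (Cfac s * (b * (ψ/b)^s))) := by
  have ha0 : (0:ℝ) < a := lt_of_lt_of_le one_pos ha
  have hb0 : (0:ℝ) < b := lt_of_lt_of_le ha0 hab
  have hb1 : (1:ℝ) ≤ b := le_trans ha hab
  rcases eq_or_lt_of_le hψ0 with hψe | hψp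
  · -- ψ = 0 : empty cover
    refine ⟨[], ?_, by simp, by simp⟩
    intro p _ _ hlt
    exfalso
    have : 0 ≤ nint (a*p.1+c) * nint (b*p.2+d) :=
      mul_nonneg (nint_nonneg _) (nint_nonneg _)
    rw [← hψe] at hlt
    linarith
  -- now 0 < ψ
  have exK : ∃ k : ℕ, 1 < (2:ℝ)^(k+2) * ψ := by
    obtain ⟨n, hn⟩ := pow_unbounded_of_one_lt (1/ψ) (one_lt_two (α := ℝ))
    refine ⟨n, ?_⟩
    have h1 : 1 < (2:ℝ)^n * ψ := by
      rw [div_lt_iff₀ hψp] at hn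
      linarith [hn]
    have h2 : (2:ℝ)^n ≤ (2:ℝ)^(n+2) := pow_le_pow_right₀ (by norm_num) (by omega)
    nlinarith
  set K := Nat.find exK with hKdef
  have hK1 : 1 < (2:ℝ)^(K+2) * ψ := Nat.find_spec exK
  have hKpos : K ≠ 0 := by
    intro h0
    rw [h0] at hK1
    norm_num at hK1
    linarith
  have hK2 : (2:ℝ)^(K+1) * ψ ≤ 1 := by
    have := Nat.find_min exK (show K - 1 < K by omega)
    push_neg at this
    have e : K - 1 + 2 = K + 1 := by omega
    rwa [e] at this
  -- the per-k sets
  set G : ℕ → Set (ℝ×ℝ) := fun k => {p : ℝ×ℝ | p.1 ∈ Icc (0:ℝ) 1 ∧ p.2 ∈ Icc (0:ℝ) 1 ∧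
    nint (a*p.1+c) < ((2:ℝ)^k)⁻¹ ∧ nint (b*p.2+d) < (2:ℝ)^(k+1)*ψ} with hG
  -- decomposition
  have hdec : ∀ p : ℝ×ℝ, p.1 ∈ Icc (0:ℝ) 1 → p.2 ∈ Icc (0:ℝ) 1 →
      nint (a*p.1+c) * nint (b*p.2+d) < ψ → ∃ k ∈ Finset.range (K+1), p ∈ G k := by
    intro p hp1 hp2 hlt
    set u := nint (a*p.1+c) with hu
    set v := nint (b*p.2+d) with hv
    have hu0 : 0 ≤ u := nint_nonneg _
    have hv0 : 0 ≤ v := nint_nonneg _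
    have hu2 : u ≤ 1/2 := nint_le_half _
    have hv2 : v ≤ 1/2 := nint_le_half _
    by_cases hcase : u < ((2:ℝ)^K)⁻¹
    · refine ⟨K, Finset.mem_range.2 (by omega), hp1, hp2, hcase, ?_⟩
      have e : (2:ℝ)^(K+2) = 2 * (2:ℝ)^(K+1) := by rw [pow_succ]; ring
      rw [e] at hK1
      linarith
    · push_neg at hcase
      have exJ : ∃ j : ℕ, ((2:ℝ)^(j+1))⁻¹ ≤ u := by
        refine ⟨K - 1, ?_⟩
        have e : K - 1 + 1 = K := by omega
        rwa [e]
      set k := Nat.find exJ with hk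
      have hk1 : ((2:ℝ)^(k+1))⁻¹ ≤ u := Nat.find_spec exJ
      have hkK : k ≤ K - 1 := Nat.find_min' exJ (by
        have e : K - 1 + 1 = K := by omega
        rw [e]; exact hcase)
      have hult : u < ((2:ℝ)^k)⁻¹ := by
        rcases Nat.eq_zero_or_pos k with hk0 | hkp
        · rw [hk0]
          simpa using (by linarith : u < 1)
        · have := Nat.find_min exJ (show k - 1 < k by omega)
          push_neg at this
          have e : k - 1 + 1 = k := by omega
          rwa [e] at this
      refine ⟨k, Finset.mem_range.2 (by omega), hp1, hp2, hult, ?_⟩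
      have hpk : (0:ℝ) < ((2:ℝ)^(k+1))⁻¹ := by positivity
      have h1 : ((2:ℝ)^(k+1))⁻¹ * v ≤ u * v := mul_le_mul_of_nonneg_right hk1 hv0
      have h2 : ((2:ℝ)^(k+1))⁻¹ * v < ψ := lt_of_le_of_lt h1 hlt
      have hp2k : (0:ℝ) < (2:ℝ)^(k+1) := by positivity
      calc v = (2:ℝ)^(k+1) * (((2:ℝ)^(k+1))⁻¹ * v) := by field_simp
        _ < (2:ℝ)^(k+1) * ψ := by
            exact mul_lt_mul_of_pos_left h2 hp2k
  -- per-k covers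
  have hperk : ∀ k ∈ Finset.range (K+1),
      ∃ L : List (Set (ℝ×ℝ)), (∀ p ∈ G k, ∃ S ∈ L, p ∈ S) ∧
        (∀ S ∈ L, EMetric.diam S ≤ ENNReal.ofReal (3*Real.sqrt ψ)) ∧
        ((L.map (fun S => EMetric.diam S ^ (1+s))).sum ≤
          ENNReal.ofReal ((a + 2*((2:ℝ)^k)⁻¹ + 1) * (b + 2*((2:ℝ)^(k+1)*ψ) + 1) *
            ((2*((((2:ℝ)^k)⁻¹)/a)) * (2*((2:ℝ)^(k+1)*ψ/b))^s +
             (2*((2:ℝ)^(k+1)*ψ/b)) * (2*((((2:ℝ)^k)⁻¹)/a))^s))) := by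
    intro k hkmem
    set δ := ((2:ℝ)^k)⁻¹ with hδdef
    set δ' := (2:ℝ)^(k+1)*ψ with hδ'def
    have hδ0 : 0 < δ := by positivity
    have hδ'0 : 0 < δ' := by positivity
    set w := 2*(δ/a) with hwdef
    set h := 2*(δ'/b) with hhdef
    have hw0 : 0 < w := by positivity
    have hh0 : 0 < h := by positivity
    have hdiam : ENNReal.ofReal (min w h) ≤ ENNReal.ofReal (3*Real.sqrt ψ) := by
      apply ENNReal.ofReal_le_ofReal
      calc min w h ≤ Real.sqrt (w*h) := min_le_sqrt_mul _ _ hw0.le hh0.le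
        _ ≤ 3*Real.sqrt ψ := by
            have hwh : w*h = 8*ψ/(a*b) := by
              rw [hwdef, hhdef, hδdef, hδ'def, pow_succ]
              field_simp
              ring
            rw [hwh]
            have h8 : 8*ψ/(a*b) ≤ 8*ψ := by
              have hab1 : (1:ℝ) ≤ a*b := by nlinarith
              rw [div_le_iff₀ (by positivity)]
              nlinarith
            calc Real.sqrt (8*ψ/(a*b)) ≤ Real.sqrt (8*ψ) := Real.sqrt_le_sqrt h8
              _ = Real.sqrt 8 * Real.sqrt ψ := Real.sqrt_mul (by norm_num) _
              _ ≤ 3*Real.sqrt ψ := by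
                  apply mul_le_mul_of_nonneg_right _ (Real.sqrt_nonneg _)
                  rw [show (3:ℝ) = Real.sqrt 9 by
                    rw [show (9:ℝ) = 3*3 by norm_num, Real.sqrt_mul_self (by norm_num)]]
                  exact Real.sqrt_le_sqrt (by norm_num)
    set Na := ⌊a + 2*δ⌋₊ + 1 with hNa
    set Nb := ⌊b + 2*δ'⌋₊ + 1 with hNb
    set P : ℕ → ℝ := fun i => (((⌈c-δ⌉:ℤ):ℝ) + (i:ℝ) - c)/a - δ/a with hP
    set Q : ℕ → ℝ := fun i => (((⌈d-δ'⌉:ℤ):ℝ) + (i:ℝ) - d)/b - δ'/b with hQ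
    obtain ⟨L, hLcov, hLdiam, hLsum⟩ := listCover_biUnion
      (Finset.range Na ×ˢ Finset.range Nb)
      (fun ii => Icc (P ii.1) (P ii.1 + w) ×ˢ Icc (Q ii.2) (Q ii.2 + h))
      (fun _ => ENNReal.ofReal (w * h^s + h * w^s))
      (ENNReal.ofReal (3*Real.sqrt ψ))
      (fun S => EMetric.diam S ^ (1+s))
      (by
        rintro ⟨i, i'⟩ _
        obtain ⟨L', h1, h2, h3⟩ := rectCover s (P i) (Q i') w h hs0 hw0 hh0
        exact ⟨L', h1, fun S hS => le_trans (h2 S hS) hdiam, h3⟩)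
    refine ⟨L, ?_, hLdiam, ?_⟩
    · rintro p ⟨hp1, hp2, hpu, hpv⟩
      apply hLcov
      obtain ⟨i, hi, hxi⟩ := oneD a c δ ha hδ0 p.1 hp1 hpu
      obtain ⟨i', hi', hyi⟩ := oneD b d δ' hb1 hδ'0 p.2 hp2 hpv
      refine mem_iUnion₂.2 ⟨(i, i'), ?_, ?_⟩
      · rw [Finset.mem_product]
        exact ⟨by simpa [hNa] using hi, by simpa [hNb] using hi'⟩
      · constructor
        · simpa [hP, hwdef] using hxi
        · simpa [hQ, hhdef] using hyi
    · refine le_trans hLsum ?_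
      rw [Finset.sum_const, Finset.card_product, Finset.card_range, Finset.card_range,
        nsmul_eq_mul]
      rw [← ENNReal.ofReal_natCast, ← ENNReal.ofReal_mul (by positivity)]
      apply ENNReal.ofReal_le_ofReal
      have h1 : ((⌊a + 2*δ⌋₊:ℝ)) ≤ a + 2*δ := Nat.floor_le (by positivity)
      have h2 : ((⌊b + 2*δ'⌋₊:ℝ)) ≤ b + 2*δ' := Nat.floor_le (by positivity)
      have hNa' : ((Na*Nb : ℕ):ℝ) ≤ (a + 2*δ + 1) * (b + 2*δ' + 1) := by
        rw [hNa, hNb]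
        push_cast
        exact mul_le_mul (by linarith) (by linarith) (by positivity) (by positivity)
      refine le_trans (mul_le_mul_of_nonneg_right hNa' (by positivity)) (le_of_eq ?_)
      rw [hwdef, hhdef, hδdef, hδ'def]
  -- combine over k
  obtain ⟨L, hLcov, hLdiam, hLsum⟩ := listCover_biUnion (Finset.range (K+1)) G
    (fun k => ENNReal.ofReal ((a + 2*((2:ℝ)^k)⁻¹ + 1) * (b + 2*((2:ℝ)^(k+1)*ψ) + 1) *
      ((2*((((2:ℝ)^k)⁻¹)/a)) * (2*((2:ℝ)^(k+1)*ψ/b))^s +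
       (2*((2:ℝ)^(k+1)*ψ/b)) * (2*((((2:ℝ)^k)⁻¹)/a))^s)))
    (ENNReal.ofReal (3*Real.sqrt ψ)) (fun S => EMetric.diam S ^ (1+s)) hperk
  refine ⟨L, ?_, hLdiam, ?_⟩
  · intro p hp1 hp2 hlt
    obtain ⟨k, hk, hpk⟩ := hdec p hp1 hp2 hlt
    exact hLcov p (mem_iUnion₂.2 ⟨k, hk, hpk⟩)
  · refine le_trans hLsum ?_
    rw [← ENNReal.ofReal_sum_of_nonneg (fun k _ => by positivity)]
    exact ENNReal.ofReal_le_ofReal (realSum s a b ψ K hs0 hs1 ha hab hψp hK2)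

lemma Cfac_pos (s : ℝ) (hs0 : 0 < s) (hs1 : s < 1) : 0 < Cfac s := by
  rw [Cfac]
  have h1 : (2:ℝ)^(s-1) < 1 := Real.rpow_lt_one_of_one_lt_of_neg (by norm_num) (by linarith)
  have h2 : (1:ℝ) < (2:ℝ)^(1-s) :=
    Real.one_lt_rpow_iff_of_pos (by norm_num) |>.2 (by norm_num; linarith)
  have h3 : (0:ℝ) < 128/(1-(2:ℝ)^(s-1)) := div_pos (by norm_num) (by linarith)
  have h4 : (0:ℝ) < 256/((2:ℝ)^(1-s)-1) := div_pos (by norm_num) (by linarith)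
  linarith

theorem stmt13 (a b c d : ℕ → ℝ) (ψ : ℕ → ℝ)
    (ha : ∀ n, 1 ≤ a n) (hab : ∀ n, a n ≤ b n) (hψ : ∀ n, 0 ≤ ψ n)
    (s : ℝ) (hs0 : 0 < s) (hs1 : s < 1)
    (hsum : Summable (fun n => b n * (ψ n / b n) ^ s)) :
    μH[1 + s] {p : ℝ × ℝ | p.1 ∈ Icc (0:ℝ) 1 ∧ p.2 ∈ Icc (0:ℝ) 1 ∧
      {n : ℕ | nint (a n * p.1 + c n) * nint (b n * p.2 + d n) < ψ n}.Infinite} = 0 := by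
  set g : ℕ → ℝ := fun n => b n * (ψ n / b n) ^ s with hg
  have hb0 : ∀ n, (0:ℝ) < b n := fun n => lt_of_lt_of_le one_pos (le_trans (ha n) (hab n))
  have hg0 : ∀ n, 0 ≤ g n := fun n => mul_nonneg (hb0 n).le (Real.rpow_nonneg (div_nonneg (hψ n) (hb0 n).le) _)
  have hgt : Filter.Tendsto g Filter.atTop (nhds 0) := hsum.tendsto_atTop_zero
  -- ψ is eventually small
  have hψ_small : ∀ ε : ℝ, 0 < ε → ∀ᶠ n in Filter.atTop, ψ n < ε := by
    intro ε hε
    have hpt : ∀ n, ψ n ^ s ≤ g n := by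
      intro n
      have e : g n = ψ n ^ s * (b n)^(1-s) := by
        rw [hg]
        simp only
        rw [Real.div_rpow (hψ n) (hb0 n).le, Real.rpow_sub (hb0 n), Real.rpow_one]
        field_simp
      rw [e]
      nth_rewrite 1 [← mul_one (ψ n ^ s)]
      apply mul_le_mul_of_nonneg_left _ (Real.rpow_nonneg (hψ n) s)
      calc (1:ℝ) = (b n)^(0:ℝ) := (Real.rpow_zero _).symm
        _ ≤ (b n)^(1-s) := Real.rpow_le_rpow_of_exponent_le (le_trans (ha n) (hab n))
            (by linarith)
    have hεs : (0:ℝ) < ε^s := Real.rpow_pos_of_pos hε s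
    have hev : ∀ᶠ n in Filter.atTop, g n < ε^s := hgt.eventually_lt_const hεs
    filter_upwards [hev] with n hn
    by_contra hcon
    push_neg at hcon
    have : ε^s ≤ ψ n ^ s := Real.rpow_le_rpow hε.le hcon hs0.le
    linarith [hpt n]
  -- choose covers
  have hex : ∀ n, ∃ L : List (Set (ℝ×ℝ)), ψ n ≤ 1/4 →
      ((∀ p : ℝ×ℝ, p.1 ∈ Icc (0:ℝ) 1 → p.2 ∈ Icc (0:ℝ) 1 →
        nint (a n*p.1+c n) * nint (b n*p.2+d n) < ψ n → ∃ S ∈ L, p ∈ S) ∧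
      (∀ S ∈ L, EMetric.diam S ≤ ENNReal.ofReal (3*Real.sqrt (ψ n))) ∧
      ((L.map (fun S => EMetric.diam S ^ (1+s))).sum ≤ ENNReal.ofReal (Cfac s * g n))) := by
    intro n
    by_cases hn : ψ n ≤ 1/4
    · obtain ⟨L, h1, h2, h3⟩ := exists_coverList s (a n) (b n) (c n) (d n) (ψ n)
        hs0 hs1 (ha n) (hab n) (hψ n) hn
      exact ⟨L, fun _ => ⟨h1, h2, h3⟩⟩
    · exact ⟨[], fun h => absurd h hn⟩
  choose CL hCL using hex
  set Lset := {p : ℝ × ℝ | p.1 ∈ Icc (0:ℝ) 1 ∧ p.2 ∈ Icc (0:ℝ) 1 ∧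
      {n : ℕ | nint (a n * p.1 + c n) * nint (b n * p.2 + d n) < ψ n}.Infinite} with hLset
  set t : ℕ → ℕ×ℕ → Set (ℝ×ℝ) := fun N i => (CL (N + i.1)).getD i.2 ∅ with ht_def
  set r : ℕ → ℝ≥0∞ := fun N => ⨆ m, ⨆ (_ : N ≤ m), ENNReal.ofReal (3*Real.sqrt (ψ m)) with hr_def
  have hgood : ∀ᶠ N in Filter.atTop, ∀ m, N ≤ m → ψ m ≤ 1/4 := by
    obtain ⟨N₀, hN₀⟩ := Filter.eventually_atTop.1 (hψ_small (1/4) (by norm_num))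
    exact Filter.eventually_atTop.2 ⟨N₀, fun N hN m hm => (hN₀ m (le_trans hN hm)).le⟩
  have hr0 : Filter.Tendsto r Filter.atTop (nhds 0) := by
    rw [ENNReal.tendsto_atTop_zero]
    intro ε hε
    rcases eq_or_ne ε ⊤ with rfl | hεtop
    · exact ⟨0, fun n _ => le_top⟩
    · have hεt : 0 < ε.toReal := ENNReal.toReal_pos hε.ne' hεtop
      obtain ⟨N₀, hN₀⟩ := Filter.eventually_atTop.1 (hψ_small ((ε.toReal/3)^2) (by positivity))
      refine ⟨N₀, fun N hN => ?_⟩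
      refine iSup₂_le fun m hm => ?_
      have hm' : ψ m < (ε.toReal/3)^2 := hN₀ m (le_trans hN hm)
      have hsq : Real.sqrt (ψ m) ≤ ε.toReal/3 := by
        calc Real.sqrt (ψ m) ≤ Real.sqrt ((ε.toReal/3)^2) := Real.sqrt_le_sqrt hm'.le
          _ = ε.toReal/3 := Real.sqrt_sq (by positivity)
      calc ENNReal.ofReal (3*Real.sqrt (ψ m)) ≤ ENNReal.ofReal ε.toReal :=
            ENNReal.ofReal_le_ofReal (by linarith)
        _ = ε := ENNReal.ofReal_toReal hεtop
  have hdiam : ∀ᶠ N in Filter.atTop, ∀ i : ℕ×ℕ, EMetric.diam (t N i) ≤ r N := by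
    filter_upwards [hgood] with N hN
    rintro ⟨n, j⟩
    rcases lt_or_ge j (CL (N + n)).length with hj | hj
    · have hmem : (CL (N + n)).getD j ∅ ∈ CL (N + n) := by
        rw [List.getD_eq_getElem _ _ hj]
        exact List.getElem_mem hj
      have h1 := (hCL (N + n) (hN _ (Nat.le_add_right _ _))).2.1 _ hmem
      refine le_trans h1 ?_
      exact le_iSup₂ (f := fun m (_ : N ≤ m) => ENNReal.ofReal (3*Real.sqrt (ψ m)))
        (N + n) (Nat.le_add_right _ _)
    · rw [ht_def]
      simp only
      rw [List.getD_eq_default _ _ hj]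
      rw [show EMetric.diam (∅ : Set (ℝ×ℝ)) = 0 from EMetric.diam_empty]
      simp
  have hcover : ∀ᶠ N in Filter.atTop, Lset ⊆ ⋃ i : ℕ×ℕ, t N i := by
    filter_upwards [hgood] with N hN
    rintro p ⟨hp1, hp2, hpinf⟩
    have hexm : ∃ m, N ≤ m ∧ nint (a m * p.1 + c m) * nint (b m * p.2 + d m) < ψ m := by
      by_contra hcon
      push_neg at hcon
      apply hpinf
      apply Set.Finite.subset (Set.finite_Iio N)
      intro m hm
      simp only [Set.mem_setOf_eq] at hm
      by_contra hmN
      simp only [Set.mem_Iio, not_lt] at hmN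
      exact absurd hm (not_lt.2 (hcon m hmN))
    obtain ⟨m, hmN, hmlt⟩ := hexm
    obtain ⟨S, hSmem, hpS⟩ := (hCL m (hN m hmN)).1 p hp1 hp2 hmlt
    obtain ⟨j, hj, hSj⟩ := List.mem_iff_getElem.1 hSmem
    refine Set.mem_iUnion.2 ⟨(m - N, j), ?_⟩
    rw [ht_def]
    simp only
    rw [Nat.add_sub_cancel' hmN, List.getD_eq_getElem _ _ hj, hSj]
    exact hpS
  have hmain := Measure.hausdorffMeasure_le_liminf_tsum (1+s) Lset r hr0 t hdiam hcover
  have hbound : ∀ᶠ N in Filter.atTop,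
      (∑' i : ℕ×ℕ, EMetric.diam (t N i) ^ (1+s)) ≤
        ENNReal.ofReal (Cfac s * ∑' n, g (n + N)) := by
    filter_upwards [hgood] with N hN
    rw [ENNReal.tsum_prod']
    have hinner : ∀ n : ℕ, (∑' j : ℕ, EMetric.diam (t N (n, j)) ^ (1+s)) ≤
        ENNReal.ofReal (Cfac s * g (n + N)) := by
      intro n
      have e : (∑' j : ℕ, EMetric.diam (t N (n, j)) ^ (1+s)) =
          ((CL (N + n)).map (fun S => EMetric.diam S ^ (1+s))).sum := by
        simp only [ht_def]
        exact tsum_getD (CL (N + n)) (fun S => EMetric.diam S ^ (1+s))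
          (by
            show EMetric.diam (∅ : Set (ℝ×ℝ)) ^ (1+s) = 0
            rw [show EMetric.diam (∅ : Set (ℝ×ℝ)) = 0 from EMetric.diam_empty]
            exact ENNReal.zero_rpow_of_pos (by linarith))
      rw [e]
      refine le_trans ((hCL (N + n) (hN _ (Nat.le_add_right _ _))).2.2) ?_
      rw [show N + n = n + N by omega]
    calc (∑' n, ∑' j : ℕ, EMetric.diam (t N (n, j)) ^ (1+s))
        ≤ ∑' n, ENNReal.ofReal (Cfac s * g (n + N)) := ENNReal.tsum_le_tsum hinner
      _ = ENNReal.ofReal (∑' n, Cfac s * g (n + N)) := by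
          rw [ENNReal.ofReal_tsum_of_nonneg]
          · intro n
            exact mul_nonneg (Cfac_pos s hs0 hs1).le (hg0 _)
          · exact ((summable_nat_add_iff N).2 hsum).mul_left (Cfac s)
      _ = ENNReal.ofReal (Cfac s * ∑' n, g (n + N)) := by
          rw [tsum_mul_left]
  have hlim : Filter.Tendsto (fun N => ENNReal.ofReal (Cfac s * ∑' n, g (n + N)))
      Filter.atTop (nhds 0) := by
    have h1 : Filter.Tendsto (fun N => ∑' n, g (n + N)) Filter.atTop (nhds 0) :=
      tendsto_sum_nat_add g
    have h2 : Filter.Tendsto (fun N => Cfac s * ∑' n, g (n + N)) Filter.atTop (nhds 0) := by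
      have := h1.const_mul (Cfac s)
      simpa using this
    have h3 := (ENNReal.continuous_ofReal.tendsto 0).comp h2
    simpa [Function.comp_def] using h3
  have hfin : μH[1+s] Lset ≤ 0 := by
    refine le_trans hmain ?_
    calc Filter.liminf (fun N => ∑' i : ℕ×ℕ, EMetric.diam (t N i) ^ (1+s)) Filter.atTop
        ≤ Filter.liminf (fun N => ENNReal.ofReal (Cfac s * ∑' n, g (n + N))) Filter.atTop :=
          Filter.liminf_le_liminf hbound
      _ = 0 := hlim.liminf_eq
  exact le_antisymm hfin (by positivity)
end

section
/- Let $a,b,c,d\in\mathbb{R}$ with $1\le a\le b$, $s\in(0,1)$, $\delta\in(0,1/2]$, and $\rho>1$. Then for the set $A(\delta)=\{x\in[0,1]:\|ax+c\|<\delta,\ \|bx+d\|<\delta\}$, one has $\mathcal{H}^s_\rho(A(\delta))\le C_s\,(b^{1-s}\delta^{1+s}L+ab^{-s}\delta^s L)$, where $C_s$ depends only on $s$ and $L=\max\{1,\frac{\log b}{a}\}$. -/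
open Set
open scoped ENNReal

/-- `log` with the convention that `log x = 1` for `x ≤ e`. -/
noncomputable def clog (x : ℝ) : ℝ := max 1 (Real.log x)

/-- Hausdorff `s`-pre-measure at scale `ρ`: infimum of `∑ rᵢ^s` over countable covers
of `F` by balls of radius `rᵢ < ρ`. -/
noncomputable def preH (s ρ : ℝ) (F : Set ℝ) : ℝ≥0∞ :=
  ⨅ (c : ℕ → ℝ) (r : ℕ → ℝ) (_ : ∀ n, 0 < r n ∧ r n < ρ)
    (_ : F ⊆ ⋃ n, Metric.ball (c n) (r n)), ∑' n, ENNReal.ofReal (r n ^ s)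

set_option maxHeartbeats 1000000 in
theorem stmt19 (s : ℝ) (hs0 : 0 < s) (hs1 : s < 1) :
    ∃ C : ℝ, 0 < C ∧ ∀ (a b c d δ ρ : ℝ), 1 ≤ a → a ≤ b →
      0 < δ → δ ≤ 1 / 2 → 1 < ρ →
      preH s ρ {x ∈ Icc (0:ℝ) 1 | nint (a * x + c) < δ ∧ nint (b * x + d) < δ}
        ≤ ENNReal.ofReal (C * (b ^ (1 - s) * δ ^ (1 + s) * max 1 (clog b / a)
            + a * b ^ (-s) * δ ^ s * max 1 (clog b / a))) := by
  refine ⟨13, by norm_num, ?_⟩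
  intro a b c d δ ρ ha hab hδ hδ2 hρ
  have hb : (1:ℝ) ≤ b := ha.trans hab
  have ha0 : (0:ℝ) < a := lt_of_lt_of_le one_pos ha
  have hb0 : (0:ℝ) < b := lt_of_lt_of_le one_pos hb
  set L : ℝ := max 1 (clog b / a) with hLdef
  have hL1 : (1:ℝ) ≤ L := le_max_left _ _
  set X : ℝ := b ^ (1-s) * δ ^ (1+s) with hXdef
  set Y : ℝ := a * b ^ (-s) * δ ^ s with hYdef
  have hX0 : 0 ≤ X := by positivity
  have hY0 : 0 ≤ Y := by positivity
  have key : preH s ρ {x ∈ Icc (0:ℝ) 1 | nint (a * x + c) < δ ∧ nint (b * x + d) < δ}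
      ≤ ENNReal.ofReal (12*X + 3*Y) := by
    refine ENNReal.le_of_forall_pos_le_add fun ε hε _ => ?_
    set ε' : ℝ := min (ε:ℝ) 1 with hε'def
    have hε'0 : 0 < ε' := lt_min hε one_pos
    have hε'1 : ε' ≤ 1 := min_le_right _ _
    have hε'le : ENNReal.ofReal ε' ≤ (ε : ℝ≥0∞) := by
      calc ENNReal.ofReal ε' ≤ ENNReal.ofReal ε := ENNReal.ofReal_le_ofReal (min_le_left _ _)
      _ = (ε : ℝ≥0∞) := ENNReal.ofReal_coe_nnreal
    set M : ℕ := ⌊a⌋₊ + 2 with hMdef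
    set K : ℕ := ⌊4*δ*b/a⌋₊ + 1 with hKdef
    set m₁ : ℤ := ⌈c - 1/2⌉ with hm₁def
    set klo : ℤ → ℤ := fun m => ⌈d + b*((m:ℝ) - c)/a - 2*δ*b/a⌉ with hklodef
    set cent : ℕ → ℝ := fun n => (((klo (m₁ + (n / K : ℕ)) + (n % K : ℕ) : ℤ) : ℝ) - d) / b
      with hcentdef
    set rad : ℕ → ℝ := fun n => if n < M * K then δ / b else (ε' * (1/2)^(n+1)) ^ (1/s)
      with hraddef
    have hρ2 : δ / b < ρ := by
      have : δ / b ≤ δ := div_le_self hδ.le hb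
      linarith
    have hpos : ∀ n, 0 < rad n ∧ rad n < ρ := by
      intro n
      by_cases hn : n < M * K
      · simp only [hraddef, if_pos hn]
        exact ⟨div_pos hδ hb0, hρ2⟩
      · simp only [hraddef, if_neg hn]
        constructor
        · apply Real.rpow_pos_of_pos; positivity
        · have h1 : (ε' * (1/2)^(n+1) : ℝ) ≤ 1 := by
            have := pow_le_one₀ (by norm_num : (0:ℝ) ≤ 1/2) (by norm_num : (1/2:ℝ) ≤ 1) (n := n+1)
            nlinarith
          have := Real.rpow_le_one (by positivity) h1 (by positivity : (0:ℝ) ≤ 1/s)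
          linarith
    have hcov : {x ∈ Icc (0:ℝ) 1 | nint (a * x + c) < δ ∧ nint (b * x + d) < δ}
        ⊆ ⋃ n, Metric.ball (cent n) (rad n) := by
      rintro x ⟨hx01, hma, hkb⟩
      obtain ⟨hx0, hx1⟩ := hx01
      set m : ℤ := round (a*x+c) with hmdef
      set k : ℤ := round (b*x+d) with hkdef
      have hm : |a*x+c - (m:ℝ)| < δ := hma
      have hk : |b*x+d - (k:ℝ)| < δ := hkb
      obtain ⟨hm1, hm2⟩ := abs_lt.mp hm
      obtain ⟨hk1, hk2⟩ := abs_lt.mp hk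
      have hax0 : 0 ≤ a * x := by positivity
      have hax1 : a * x ≤ a := by nlinarith
      -- m bounds
      have hmm₁ : m₁ ≤ m := by
        apply Int.ceil_le.mpr
        linarith
      have hm₁c : (c - 1/2 : ℝ) ≤ (m₁ : ℝ) := Int.le_ceil _
      set i : ℕ := (m - m₁).toNat with hidef
      have hi : (i : ℤ) = m - m₁ := Int.toNat_of_nonneg (by omega)
      have hiM : i < M := by
        have h1 : (i : ℝ) = (m : ℝ) - (m₁ : ℝ) := by exact_mod_cast hi
        have h2 : (a:ℝ) < ⌊a⌋₊ + 1 := Nat.lt_floor_add_one a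
        have h3 : (i : ℝ) < (M : ℝ) := by
          rw [h1]
          push_cast [hMdef]
          linarith
        exact_mod_cast h3
      -- distance facts
      have hxk : |x - ((k:ℝ) - d)/b| < δ/b := by
        rw [show x - ((k:ℝ) - d)/b = (b*x+d-(k:ℝ))/b by field_simp; ring, abs_div,
          abs_of_pos hb0]
        gcongr
      have hxm : |x - ((m:ℝ) - c)/a| < δ/a := by
        rw [show x - ((m:ℝ) - c)/a = (a*x+c-(m:ℝ))/a by field_simp; ring, abs_div,
          abs_of_pos ha0]
        gcongr
      -- k bounds
      have hba : δ ≤ δ * b / a := by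
        rw [le_div_iff₀ ha0]
        nlinarith
      have hkg : |(k:ℝ) - (d + b*((m:ℝ) - c)/a)| < 2*δ*b/a := by
        have e : (k:ℝ) - (d + b*((m:ℝ) - c)/a) = b * (((k:ℝ) - d)/b - ((m:ℝ) - c)/a) := by
          field_simp
          ring
        have tri : |((k:ℝ) - d)/b - ((m:ℝ) - c)/a| < δ/b + δ/a := by
          calc |((k:ℝ) - d)/b - ((m:ℝ) - c)/a|
              ≤ |((k:ℝ) - d)/b - x| + |x - ((m:ℝ) - c)/a| := by
                rw [show ((k:ℝ) - d)/b - ((m:ℝ) - c)/a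
                  = (((k:ℝ) - d)/b - x) + (x - ((m:ℝ) - c)/a) by ring]
                exact abs_add_le _ _
          _ < δ/b + δ/a := by
                rw [abs_sub_comm]
                exact add_lt_add hxk hxm
        rw [e, abs_mul, abs_of_pos hb0]
        have h1 : b * (δ/b + δ/a) = δ + δ*b/a := by field_simp
        have h2 : b * |((k:ℝ) - d)/b - ((m:ℝ) - c)/a| < b * (δ/b + δ/a) := by
          exact (mul_lt_mul_iff_right₀ hb0).mpr tri
        have h4 : (2*δ*b/a : ℝ) = δ*b/a + δ*b/a := by ring
        linarith
      obtain ⟨hkg1, hkg2⟩ := abs_lt.mp hkg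
      have hklom : klo m ≤ k := by
        apply Int.ceil_le.mpr
        linarith
      have hkloc : (d + b*((m:ℝ) - c)/a - 2*δ*b/a : ℝ) ≤ (klo m : ℝ) := Int.le_ceil _
      set j : ℕ := (k - klo m).toNat with hjdef
      have hj : (j : ℤ) = k - klo m := Int.toNat_of_nonneg (by omega)
      have hjK : j < K := by
        have h1 : (j : ℝ) = (k : ℝ) - (klo m : ℝ) := by exact_mod_cast hj
        have h2 : (4*δ*b/a : ℝ) < ⌊4*δ*b/a⌋₊ + 1 := Nat.lt_floor_add_one _
        have h4 : (4*δ*b/a:ℝ) = 2*δ*b/a + 2*δ*b/a := by ring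
        have h3 : (j : ℝ) < (K : ℝ) := by
          rw [h1]
          push_cast [hKdef]
          linarith
        exact_mod_cast h3
      set n : ℕ := j + K * i with hndef
      have hnN : n < M * K := by
        calc n < K + K * i := Nat.add_lt_add_right hjK _
        _ = K * (i + 1) := by ring
        _ ≤ K * M := Nat.mul_le_mul_left K hiM
        _ = M * K := Nat.mul_comm _ _
      have hdivn : n / K = i := by
        rw [hndef, Nat.add_mul_div_left _ _ (Nat.succ_pos _), Nat.div_eq_of_lt hjK, Nat.zero_add]
      have hmodn : n % K = j := by
        rw [hndef, Nat.add_mul_mod_self_left, Nat.mod_eq_of_lt hjK]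
      have hcn : cent n = ((k:ℝ) - d)/b := by
        rw [hcentdef]
        simp only [hdivn, hmodn]
        have : m₁ + (i : ℤ) = m := by omega
        rw [this]
        have : klo m + (j : ℤ) = k := by omega
        rw [this]
      refine mem_iUnion.mpr ⟨n, ?_⟩
      rw [Metric.mem_ball, Real.dist_eq, hcn]
      calc |x - ((k:ℝ) - d)/b| < δ/b := hxk
      _ = rad n := by rw [hraddef]; simp [if_pos hnN]
    -- bound the sum
    have hsum : ∑' (n : ℕ), ENNReal.ofReal (rad n ^ s)
        ≤ ENNReal.ofReal ((M*K : ℕ) * (δ/b)^s) + ENNReal.ofReal ε' := by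
      have hpt : ∀ n : ℕ, ENNReal.ofReal (rad n ^ s)
          ≤ (if n < M*K then ENNReal.ofReal ((δ/b)^s) else 0)
            + ENNReal.ofReal (ε' * (1/2)^(n+1)) := by
        intro n
        by_cases hn : n < M*K
        · simp only [hraddef, if_pos hn]
          exact le_add_right le_rfl
        · simp only [hraddef, if_neg hn, zero_add]
          rw [← Real.rpow_mul (by positivity), one_div_mul_cancel hs0.ne', Real.rpow_one]
      calc ∑' (n : ℕ), ENNReal.ofReal (rad n ^ s)
          ≤ ∑' (n : ℕ), ((if n < M*K then ENNReal.ofReal ((δ/b)^s) else 0)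
            + ENNReal.ofReal (ε' * (1/2)^(n+1))) := ENNReal.tsum_le_tsum hpt
      _ = (∑' (n : ℕ), (if n < M*K then ENNReal.ofReal ((δ/b)^s) else 0))
            + ∑' (n : ℕ), ENNReal.ofReal (ε' * (1/2)^(n+1)) := ENNReal.tsum_add
      _ ≤ ENNReal.ofReal ((M*K : ℕ) * (δ/b)^s) + ENNReal.ofReal ε' := by
          gcongr
          · have : ∑' (n : ℕ), (if n < M*K then ENNReal.ofReal ((δ/b)^s) else 0)
                = ∑ n ∈ Finset.range (M*K), (if n < M*K then ENNReal.ofReal ((δ/b)^s) else 0) := by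
              apply tsum_eq_sum
              intro n hn
              rw [if_neg (by simpa using hn)]
            rw [this]
            have : ∑ n ∈ Finset.range (M*K), (if n < M*K then ENNReal.ofReal ((δ/b)^s) else 0)
                = (M*K) • ENNReal.ofReal ((δ/b)^s) := by
              rw [Finset.sum_congr rfl (fun n hn => if_pos (Finset.mem_range.mp hn)),
                Finset.sum_const, Finset.card_range]
            rw [this, nsmul_eq_mul, ← ENNReal.ofReal_natCast,
              ← ENNReal.ofReal_mul (Nat.cast_nonneg _)]
          · have h : ∀ n : ℕ, ENNReal.ofReal (ε' * (1/2)^(n+1)) =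
                ENNReal.ofReal ε' * (ENNReal.ofReal (1/2))^(n+1) := by
              intro n
              rw [ENNReal.ofReal_mul hε'0.le, ENNReal.ofReal_pow (by norm_num)]
            rw [tsum_congr h, ENNReal.tsum_mul_left]
            have h2 : ENNReal.ofReal (1/2) = 2⁻¹ := by
              rw [one_div, ENNReal.ofReal_inv_of_pos (by norm_num)]
              norm_num
            rw [h2]
            have h3 : ∑' (n : ℕ), (2⁻¹ : ℝ≥0∞) ^ (n+1) = 2⁻¹ * ∑' (n : ℕ), (2⁻¹ : ℝ≥0∞) ^ n := by
              rw [← ENNReal.tsum_mul_left]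
              exact tsum_congr fun n => by rw [pow_succ, mul_comm]
            rw [h3, ENNReal.tsum_geometric]
            have h4 : (1 - 2⁻¹ : ℝ≥0∞)⁻¹ = 2 := by
              rw [ENNReal.one_sub_inv_two]; norm_num
            rw [h4]
            have h5 : (2⁻¹ : ℝ≥0∞) * 2 = 1 := ENNReal.inv_mul_cancel (by norm_num) (by norm_num)
            rw [h5, mul_one]
    -- bound the count
    have hcount : ((M*K : ℕ) : ℝ) * (δ/b)^s ≤ 12*X + 3*Y := by
      have hu : (0:ℝ) ≤ (δ/b)^s := by positivity
      have hMr : ((M:ℕ):ℝ) ≤ a + 2 := by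
        push_cast [hMdef]
        have := Nat.floor_le ha0.le
        linarith
      set q : ℝ := 4*δ*b/a with hqdef
      have hq0 : 0 ≤ q := by positivity
      have hKr : ((K:ℕ):ℝ) ≤ q + 1 := by
        push_cast [hKdef]
        have := Nat.floor_le hq0
        linarith
      have haq : a * q = 4*δ*b := by
        rw [hqdef]
        field_simp
      have hqb : q ≤ 4*δ*b := by
        rw [hqdef]
        calc 4*δ*b/a ≤ 4*δ*b/1 := by
              apply div_le_div_of_nonneg_left (by positivity) one_pos ha
        _ = 4*δ*b := by ring
      have hNr : ((M*K : ℕ) : ℝ) ≤ 12*δ*b + 3*a := by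
        rw [Nat.cast_mul]
        have hprod : ((M:ℕ):ℝ) * ((K:ℕ):ℝ) ≤ (a+2)*(q+1) :=
          mul_le_mul hMr hKr (Nat.cast_nonneg _) (by linarith)
        have hexp : ((a:ℝ)+2)*(q+1) = a*q + a + 2*q + 2 := by ring
        linarith
      have heq : (12*δ*b + 3*a) * (δ/b)^s = 12*X + 3*Y := by
        have e1 : (δ/b)^s = δ^s * b^(-s) := by
          rw [Real.div_rpow hδ.le hb0.le, Real.rpow_neg hb0.le, div_eq_mul_inv]
        have e2 : δ^(1+s) = δ * δ^s := by
          rw [Real.rpow_add hδ, Real.rpow_one]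
        have e3 : b^(1-s) = b * b^(-s) := by
          rw [show (1:ℝ)-s = 1 + (-s) by ring, Real.rpow_add hb0, Real.rpow_one]
        rw [hXdef, hYdef, e1, e2, e3]
        ring
      calc ((M*K : ℕ) : ℝ) * (δ/b)^s ≤ (12*δ*b + 3*a) * (δ/b)^s :=
            mul_le_mul_of_nonneg_right hNr hu
      _ = 12*X + 3*Y := heq
    calc preH s ρ {x ∈ Icc (0:ℝ) 1 | nint (a * x + c) < δ ∧ nint (b * x + d) < δ}
        ≤ ∑' (n : ℕ), ENNReal.ofReal (rad n ^ s) := by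
          exact iInf_le_of_le cent (iInf_le_of_le rad (iInf_le_of_le hpos
            (iInf_le_of_le hcov le_rfl)))
    _ ≤ ENNReal.ofReal ((M*K : ℕ) * (δ/b)^s) + ENNReal.ofReal ε' := hsum
    _ ≤ ENNReal.ofReal (12*X + 3*Y) + (ε : ℝ≥0∞) :=
          add_le_add (ENNReal.ofReal_le_ofReal hcount) hε'le
  refine key.trans (ENNReal.ofReal_le_ofReal ?_)
  have h1 : X ≤ X * L := le_mul_of_one_le_right hX0 hL1
  have h2 : Y ≤ Y * L := le_mul_of_one_le_right hY0 hL1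
  have h3 : 0 ≤ X * L := by nlinarith
  have h4 : 0 ≤ Y * L := by nlinarith
  nlinarith
end
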